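/- Let q be a prime power, n ≥ 1 an integer, and K a finite field with q^n elements. Let f ∈ K[t] be a polynomial of degree < q^n. Then the following are equivalent: (1) f is (n,q)-quasi-symmetric, i.e., there exists a polynomial F in n variables over K that is fixed by the cyclic permutation of the variables (the n-cycle sending variable j to variable j+1 mod n) such that f(t) = F(t, t^q, t^{q^2}, …, t^{q^{n−1}}) as polynomials in K[t]; (2) t^{q^n} − t divides f(t^q) − f(t) in K[t]. -/

import Mathlib

open Polynomial Finset

namespace QS11

def sig (q k m : ℕ) : ℕ := q * (m % q ^ k) + m / q ^ k

def tau (q k r : ℕ) : ℕ := q ^ k * (r % q) + r / q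

lemma digit_sum (q : ℕ) (N m : ℕ) :
    ∑ j ∈ Finset.range N, m / q ^ j % q * q ^ j = m % q ^ N := by
  induction N with
  | zero => simp [Nat.mod_one]
  | succ N ih =>
      rw [Finset.sum_range_succ, ih, pow_succ, Nat.mod_mul]
      ring

variable {q k m r : ℕ}

lemma div_lt (hq : 0 < q) (hm : m < q ^ (k + 1)) : m / q ^ k < q := by
  have hpk : 0 < q ^ k := Nat.pow_pos hq
  refine (Nat.div_lt_iff_lt_mul hpk).2 ?_
  rwa [pow_succ, mul_comm] at hm

lemma sig_lt (hq : 0 < q) (hm : m < q ^ (k + 1)) : sig q k m < q ^ (k + 1) := by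
  have hpk : 0 < q ^ k := Nat.pow_pos hq
  have hA : m % q ^ k < q ^ k := Nat.mod_lt _ hpk
  have hB : m / q ^ k < q := div_lt hq hm
  calc sig q k m < q * (m % q ^ k) + q := by unfold sig; omega
    _ = q * (m % q ^ k + 1) := by ring
    _ ≤ q * q ^ k := Nat.mul_le_mul_left _ (by omega)
    _ = q ^ (k + 1) := by rw [pow_succ, mul_comm]

lemma tau_sig (hq : 0 < q) (hm : m < q ^ (k + 1)) : tau q k (sig q k m) = m := by
  have hB : m / q ^ k < q := div_lt hq hm
  unfold sig tau
  rw [Nat.mul_add_mod, Nat.mul_add_div hq, Nat.mod_eq_of_lt hB, Nat.div_eq_of_lt hB,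
    Nat.add_zero, Nat.div_add_mod]

lemma sig_tau (hq : 0 < q) (hr : r < q ^ (k + 1)) : sig q k (tau q k r) = r := by
  have hpk : 0 < q ^ k := Nat.pow_pos hq
  have hB : r / q < q ^ k := by
    refine (Nat.div_lt_iff_lt_mul hq).2 ?_
    rwa [pow_succ] at hr
  unfold sig tau
  rw [Nat.mul_add_mod, Nat.mul_add_div hpk, Nat.mod_eq_of_lt hB, Nat.div_eq_of_lt hB,
    Nat.add_zero, Nat.div_add_mod]

lemma tau_lt (hq : 0 < q) (hr : r < q ^ (k + 1)) : tau q k r < q ^ (k + 1) := by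
  have hpk : 0 < q ^ k := Nat.pow_pos hq
  have hB : r / q < q ^ k := by
    refine (Nat.div_lt_iff_lt_mul hq).2 ?_
    rwa [pow_succ] at hr
  have hA : r % q < q := Nat.mod_lt _ hq
  calc tau q k r < q ^ k * (r % q) + q ^ k := by unfold tau; omega
    _ = q ^ k * (r % q + 1) := by ring
    _ ≤ q ^ k * q := Nat.mul_le_mul_left _ (by omega)
    _ = q ^ (k + 1) := by rw [pow_succ]

lemma sig_eq_zero_iff (hq : 0 < q) : sig q k m = 0 ↔ m = 0 := by
  unfold sig
  constructor
  · intro h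
    have hB : m / q ^ k = 0 := (Nat.add_eq_zero.1 h).2
    have hA : m % q ^ k = 0 := by
      have h' : q * (m % q ^ k) = 0 := (Nat.add_eq_zero.1 h).1
      rcases Nat.mul_eq_zero.1 h' with h'' | h''
      · omega
      · exact h''
    have hdm := Nat.div_add_mod m (q ^ k)
    rw [hB, hA, Nat.mul_zero] at hdm
    omega
  · rintro rfl; simp

/-- key arithmetic identity: `q * m = sig q k m + (q^(k+1) - 1) * (m / q^k)`. -/
lemma mul_eq_sig_add (hq : 0 < q) : q * m = sig q k m + (q ^ (k + 1) - 1) * (m / q ^ k) := by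
  have h1 : q ^ k * (m / q ^ k) + m % q ^ k = m := Nat.div_add_mod m (q ^ k)
  have h2 : q * m = q ^ (k + 1) * (m / q ^ k) + q * (m % q ^ k) := by
    rw [pow_succ, mul_comm (q ^ k) q, mul_assoc]
    calc q * m = q * (q ^ k * (m / q ^ k) + m % q ^ k) := by rw [h1]
      _ = q * (q ^ k * (m / q ^ k)) + q * (m % q ^ k) := by ring
  have h3 : 1 ≤ q ^ (k + 1) := Nat.one_le_pow _ _ hq
  have h4 : q ^ (k + 1) * (m / q ^ k) = (q ^ (k + 1) - 1) * (m / q ^ k) + m / q ^ k := by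
    have h5 : q ^ (k + 1) - 1 + 1 = q ^ (k + 1) := by omega
    calc q ^ (k + 1) * (m / q ^ k) = (q ^ (k + 1) - 1 + 1) * (m / q ^ k) := by rw [h5]
      _ = (q ^ (k + 1) - 1) * (m / q ^ k) + m / q ^ k := by ring
  unfold sig
  omega

lemma sig_mod_q : sig q k m % q = m / q ^ k % q := by
  unfold sig; rw [Nat.mul_add_mod]

lemma sig_div_pow_mod (hq : 0 < q) (hm : m < q ^ (k + 1)) {j : ℕ} (hj : j < k) :
    sig q k m / q ^ (j + 1) % q = m / q ^ j % q := by
  have hB : m / q ^ k < q := div_lt hq hm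
  have h1 : sig q k m / q ^ (j + 1) = (m % q ^ k) / q ^ j := by
    rw [pow_succ', ← Nat.div_div_eq_div_mul]
    unfold sig
    rw [Nat.mul_add_div hq, Nat.div_eq_of_lt hB, Nat.add_zero]
  rw [h1]
  have h2 : q ^ k = q ^ j * q ^ (k - j) := by
    rw [← pow_add]; congr 1; omega
  rw [h2, Nat.mod_mul_right_div_self]
  exact Nat.mod_mod_of_dvd _ (dvd_pow_self q (by omega))

/-- in a finite field with `q^(k+1)` elements, `a ^ (q*m) = a ^ sig q k m` for `m < q^(k+1)`. -/
lemma pow_sig {K : Type*} [Field K] [Fintype K] (hK : Fintype.card K = q ^ (k + 1))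
    (hq : 0 < q) (hm : m < q ^ (k + 1)) (a : K) : a ^ (q * m) = a ^ sig q k m := by
  rcases eq_or_ne a 0 with rfl | ha
  · rcases eq_or_ne m 0 with rfl | hm0
    · simp [sig]
    · rw [zero_pow (by positivity), zero_pow (by simp [sig_eq_zero_iff hq, hm0])]
  · rw [mul_eq_sig_add hq, pow_add, pow_mul]
    have h1 : a ^ (q ^ (k + 1) - 1) = 1 := by
      rw [← hK]; exact FiniteField.pow_card_sub_one_eq_one a ha
    rw [h1, one_pow, mul_one]

lemma eval_aeval {K : Type*} [CommSemiring K] {n : ℕ} (F : MvPolynomial (Fin n) K)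
    (g : Fin n → Polynomial K) (b : K) :
    (MvPolynomial.aeval g F).eval b = MvPolynomial.eval (fun j => (g j).eval b) F := by
  induction F using MvPolynomial.induction_on with
  | C a => simp
  | add p r hp hr => simp [hp, hr]
  | mul_X p i hp => simp [hp]

end QS11


open QS11 in

/-- a polynomial `f ∈ K[t]` of degree `< q^n` over the finite field `K` with
`q^n` elements is `(n,q)`-quasi-symmetric (i.e. it is the evaluation at
`(t, t^q, …, t^{q^{n−1}})` of an `n`-variable polynomial fixed by the cyclic permutation of
the variables) iff `t^{q^n} − t` divides `f(t^q) − f(t)`. -/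
theorem quasiSymmetric_iff_frobenius_invariant
    (q n : ℕ) (hq : IsPrimePow q) (hn : 1 ≤ n)
    (K : Type*) [Field K] [Fintype K] (hK : Fintype.card K = q ^ n)
    (f : Polynomial K) (hdeg : f.natDegree < q ^ n) :
    (∃ F : MvPolynomial (Fin n) K,
        MvPolynomial.rename (finRotate n) F = F ∧
        MvPolynomial.aeval
          (fun j : Fin n => (Polynomial.X : Polynomial K) ^ q ^ (j : ℕ)) F = f) ↔
      (Polynomial.X ^ q ^ n - Polynomial.X : Polynomial K) ∣
        (f.comp (Polynomial.X ^ q) - f) := by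
  classical
  obtain ⟨k, rfl⟩ : ∃ k, n = k + 1 := ⟨n - 1, by omega⟩
  have hq2 : 2 ≤ q := hq.two_le
  have hq0 : 0 < q := by omega
  have hQ1 : 1 < q ^ (k + 1) := Nat.one_lt_pow (by omega) hq2
  -- the divisibility is equivalent to `f(a^q) = f(a)` for all `a : K`
  have hdvd_iff : ((X : K[X]) ^ q ^ (k + 1) - X ∣ f.comp (X ^ q) - f) ↔
      ∀ a : K, f.eval (a ^ q) = f.eval a := by
    constructor
    · rintro ⟨u, hu⟩ a
      have h1 : (f.comp (X ^ q) - f).eval a = 0 := by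
        rw [hu, eval_mul, eval_sub, eval_pow, eval_X]
        have : a ^ q ^ (k + 1) = a := by rw [← hK]; exact FiniteField.pow_card a
        rw [this, sub_self, zero_mul]
      rw [eval_sub, eval_comp, eval_pow, eval_X, sub_eq_zero] at h1
      exact h1
    · intro hev
      rcases eq_or_ne (f.comp (X ^ q) - f) 0 with h0 | h0
      · rw [h0]; exact dvd_zero _
      have hXQX : ((X : K[X]) ^ q ^ (k + 1) - X) =
          ((Finset.univ.val : Multiset K).map fun a : K => X - Polynomial.C a).prod := by
        have h1 : ((X : K[X]) ^ q ^ (k + 1) - X).roots = Finset.univ.val := by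
          have h := FiniteField.roots_X_pow_card_sub_X K
          rwa [hK] at h
        rw [← h1]
        refine (Polynomial.prod_multiset_X_sub_C_of_monic_of_roots_card_eq ?_ ?_).symm
        · have h2 : q ^ (k + 1) - 1 + 1 = q ^ (k + 1) := by omega
          have hle : (1 : ℕ) < q ^ (k + 1) - 1 + 1 := by omega
          have hmon : ((X : K[X]) ^ (q ^ (k + 1) - 1 + 1) - X).Monic :=
            Polynomial.monic_X_pow_sub
              (by rw [Polynomial.degree_X]; exact_mod_cast hle)
          rwa [h2] at hmon
        · rw [h1, FiniteField.X_pow_card_sub_X_natDegree_eq K hQ1]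
          simp [hK]
      rw [hXQX, Multiset.prod_X_sub_C_dvd_iff_le_roots h0, Multiset.le_iff_count]
      intro a
      have hmem : a ∈ (f.comp (X ^ q) - f).roots := by
        rw [Polynomial.mem_roots h0]
        simp only [IsRoot.def, eval_sub, eval_comp, eval_pow, eval_X]
        rw [hev a, sub_self]
      calc Multiset.count a Finset.univ.val ≤ 1 :=
            (Multiset.nodup_iff_count_le_one.1 Finset.univ.nodup) a
        _ ≤ Multiset.count a (f.comp (X ^ q) - f).roots :=
            Multiset.one_le_count_iff_mem.2 hmem
  -- evaluation of the canonical lift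
  have hGaeval : (MvPolynomial.aeval fun j : Fin (k + 1) => (X : K[X]) ^ q ^ (j : ℕ))
      (∑ m ∈ Finset.range (q ^ (k + 1)), MvPolynomial.C (f.coeff m) *
        ∏ j : Fin (k + 1), MvPolynomial.X j ^ (m / q ^ (j : ℕ) % q)) = f := by
    rw [map_sum]
    have key : ∀ m ∈ Finset.range (q ^ (k + 1)),
        (MvPolynomial.aeval fun j : Fin (k + 1) => (X : K[X]) ^ q ^ (j : ℕ))
          (MvPolynomial.C (f.coeff m) *
            ∏ j : Fin (k + 1), MvPolynomial.X j ^ (m / q ^ (j : ℕ) % q)) =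
        Polynomial.C (f.coeff m) * X ^ m := by
      intro m hm
      rw [Finset.mem_range] at hm
      rw [map_mul, map_prod, MvPolynomial.aeval_C]
      simp only [map_pow, MvPolynomial.aeval_X]
      simp only [← pow_mul']
      rw [Finset.prod_pow_eq_pow_sum]
      have hsum : ∑ j : Fin (k + 1), m / q ^ (j : ℕ) % q * q ^ (j : ℕ) = m := by
        rw [Fin.sum_univ_eq_sum_range (fun j => m / q ^ j % q * q ^ j) (k + 1),
          digit_sum, Nat.mod_eq_of_lt hm]
      rw [hsum, Polynomial.algebraMap_eq]
    rw [Finset.sum_congr rfl key]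
    conv_rhs => rw [Polynomial.as_sum_range' f (q ^ (k + 1)) hdeg]
    exact Finset.sum_congr rfl fun m _ => by rw [Polynomial.C_mul_X_pow_eq_monomial]
  constructor
  · -- quasi-symmetric → divisibility
    rintro ⟨F, hFrot, hFev⟩
    rw [hdvd_iff]
    intro a
    have h1 : ∀ b : K, f.eval b = MvPolynomial.eval (fun j : Fin (k + 1) => b ^ q ^ (j : ℕ)) F := by
      intro b
      rw [← hFev, eval_aeval]
      have hb : (fun j : Fin (k + 1) => Polynomial.eval b ((X : K[X]) ^ q ^ (j : ℕ)))
          = fun j : Fin (k + 1) => b ^ q ^ (j : ℕ) := by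
        funext j
        rw [eval_pow, eval_X]
      rw [hb]
    have hfun : ((fun j : Fin (k + 1) => a ^ q ^ (j : ℕ)) ∘ (finRotate (k + 1)))
        = fun j : Fin (k + 1) => (a ^ q) ^ q ^ (j : ℕ) := by
      funext j
      rcases eq_or_ne j (Fin.last k) with rfl | hj
      · simp only [Function.comp_apply, finRotate_last, Fin.val_zero, pow_zero, pow_one,
          Fin.val_last]
        rw [← pow_mul, ← pow_succ', ← hK, FiniteField.pow_card]
      · simp only [Function.comp_apply]
        rw [finRotate_succ_apply, Fin.val_add_one_of_lt ((Fin.le_last j).lt_of_ne hj),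
          ← pow_mul, ← pow_succ']
    rw [h1, h1]
    conv_rhs => rw [← hFrot]
    rw [MvPolynomial.eval_rename, hfun]
  · -- divisibility → quasi-symmetric
    intro hdvd
    have hev := hdvd_iff.1 hdvd
    -- the auxiliary polynomial h
    set h : K[X] := ∑ m ∈ Finset.range (q ^ (k + 1)),
      Polynomial.C (f.coeff m) * X ^ sig q k m with hh
    have hcoeffh : ∀ m < q ^ (k + 1), h.coeff (sig q k m) = f.coeff m := by
      intro m hm
      rw [hh, Polynomial.finset_sum_coeff]
      rw [Finset.sum_eq_single m]
      · rw [Polynomial.coeff_C_mul, Polynomial.coeff_X_pow, if_pos rfl, mul_one]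
      · intro m' hm' hne
        rw [Finset.mem_range] at hm'
        rw [Polynomial.coeff_C_mul, Polynomial.coeff_X_pow, if_neg, mul_zero]
        intro hcontra
        exact hne (by rw [← tau_sig hq0 hm', ← hcontra, tau_sig hq0 hm])
      · intro hm'
        exact absurd (Finset.mem_range.2 hm) hm'
    have hdegh : h.natDegree < q ^ (k + 1) := by
      have : h.natDegree ≤ q ^ (k + 1) - 1 := by
        apply Polynomial.natDegree_sum_le_of_forall_le
        intro m hm
        rw [Finset.mem_range] at hm
        refine le_trans (Polynomial.natDegree_C_mul_le _ _) ?_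
        rw [Polynomial.natDegree_X_pow]
        have := sig_lt hq0 hm
        omega
      omega
    have hevalh : ∀ a : K, h.eval a = f.eval (a ^ q) := by
      intro a
      conv_rhs => rw [Polynomial.as_sum_range' f (q ^ (k + 1)) hdeg]
      rw [hh, Polynomial.eval_finset_sum, Polynomial.eval_finset_sum]
      refine Finset.sum_congr rfl fun m hm => ?_
      rw [Finset.mem_range] at hm
      rw [Polynomial.eval_monomial, eval_mul, eval_C, eval_pow, eval_X, ← pow_mul',
        mul_comm m q, pow_sig hK hq0 hm]
    have hfh : h = f := by
      have hsub : h - f = 0 := by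
        apply Polynomial.eq_zero_of_natDegree_lt_card_of_eval_eq_zero (f := (id : K → K))
          _ Function.injective_id
        · intro a
          rw [eval_sub, hevalh, hev, sub_self]
        · rw [hK]
          refine lt_of_le_of_lt (Polynomial.natDegree_sub_le _ _) ?_
          exact max_lt hdegh hdeg
      exact sub_eq_zero.mp hsub
    have hcoef : ∀ m < q ^ (k + 1), f.coeff (sig q k m) = f.coeff m := by
      intro m hm
      calc f.coeff (sig q k m) = h.coeff (sig q k m) := by rw [hfh]
        _ = f.coeff m := hcoeffh m hm
    -- the canonical lift
    refine ⟨∑ m ∈ Finset.range (q ^ (k + 1)), MvPolynomial.C (f.coeff m) *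
        ∏ j : Fin (k + 1), MvPolynomial.X j ^ (m / q ^ (j : ℕ) % q), ?_, hGaeval⟩
    rw [map_sum]
    have key : ∀ m ∈ Finset.range (q ^ (k + 1)),
        (MvPolynomial.rename (finRotate (k + 1)))
          (MvPolynomial.C (f.coeff m) *
            ∏ j : Fin (k + 1), MvPolynomial.X j ^ (m / q ^ (j : ℕ) % q)) =
        MvPolynomial.C (f.coeff (sig q k m)) *
          ∏ j : Fin (k + 1), MvPolynomial.X j ^ (sig q k m / q ^ (j : ℕ) % q) := by
      intro m hm
      rw [Finset.mem_range] at hm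
      rw [map_mul, MvPolynomial.rename_C, map_prod, hcoef m hm]
      congr 1
      simp only [map_pow, MvPolynomial.rename_X]
      refine Fintype.prod_equiv (finRotate (k + 1))
        (fun j => MvPolynomial.X (finRotate (k + 1) j) ^ (m / q ^ (j : ℕ) % q))
        (fun j => MvPolynomial.X j ^ (sig q k m / q ^ (j : ℕ) % q)) ?_
      intro j
      have hexp : sig q k m / q ^ (((finRotate (k + 1)) j : Fin (k + 1)) : ℕ) % q
          = m / q ^ (j : ℕ) % q := by
        rcases eq_or_ne j (Fin.last k) with rfl | hj
        · rw [finRotate_last]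
          simp only [Fin.val_zero, pow_zero, Nat.div_one, Fin.val_last]
          exact sig_mod_q
        · rw [finRotate_succ_apply, Fin.val_add_one_of_lt ((Fin.le_last j).lt_of_ne hj)]
          have hjk : (j : ℕ) < k := by
            have h1 := j.isLt
            have h2 : (j : ℕ) ≠ k := fun hc => hj (Fin.ext hc)
            omega
          exact sig_div_pow_mod hq0 hm hjk
      simp only [hexp]
    rw [Finset.sum_congr rfl key]
    refine Finset.sum_nbij' (fun m => sig q k m) (fun r => tau q k r) ?_ ?_ ?_ ?_ ?_
    · intro m hm
      rw [Finset.mem_range] at hm ⊢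
      exact sig_lt hq0 hm
    · intro r hr
      rw [Finset.mem_range] at hr ⊢
      exact tau_lt hq0 hr
    · intro m hm
      rw [Finset.mem_range] at hm
      exact tau_sig hq0 hm
    · intro r hr
      rw [Finset.mem_range] at hr
      exact sig_tau hq0 hr
    · intro m hm
      rfl
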